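/- arXiv:cs/0407056 — 3 statements merged into one kernel-verified Lean document; each statement's English description precedes it below -/
import Mathlib

section
/- For any two density matrices ρ and ξ on the same finite-dimensional Hilbert space, the fidelity satisfies 1 - (1/2)‖ρ - ξ‖_tr ≤ F(ρ, ξ) ≤ √(1 - (1/4)‖ρ - ξ‖_tr²). -/
open scoped ComplexOrder Matrix

/-- Matrix square root: the positive semidefinite square root of a PSD matrix,
with junk value 0 for non-PSD matrices. -/
noncomputable def sqrtM {i : Type} [Fintype i] [DecidableEq i] (A : Matrix i i Complex) :
    Matrix i i Complex :=
  letI := Classical.propDecidable A.PosSemidef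
  if h : A.PosSemidef then (h.1.eigenvectorUnitary : Matrix i i Complex) *
    Matrix.diagonal ((↑) ∘ (√·) ∘ h.1.eigenvalues) * (star h.1.eigenvectorUnitary : Matrix i i Complex)
  else 0

/-- Trace norm: trace of the square root of X-dagger-X (sum of singular values). -/
noncomputable def traceNorm {i : Type} [Fintype i] [DecidableEq i] (X : Matrix i i Complex) : Real :=
  ((sqrtM (Xᴴ * X)).trace).re

/-- Fidelity F(rho, xi) = trace of the square root of (sqrt rho * xi * sqrt rho). -/
noncomputable def fidelity {i : Type} [Fintype i] [DecidableEq i] (ρ ξ : Matrix i i Complex) : Real :=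
  ((sqrtM (sqrtM ρ * ξ * sqrtM ρ)).trace).re

/-- Outer product of vectors. -/
noncomputable def outer {i : Type} (ψ φ : i → Complex) : Matrix i i Complex :=
  Matrix.of fun p q => ψ p * star (φ q)

/-- Partial trace over the first tensor factor. -/
noncomputable def ptraceFst {α β : Type} [Fintype α] (X : Matrix (α × β) (α × β) Complex) :
    Matrix β β Complex :=
  Matrix.of fun i j => ∑ a : α, X (a, i) (a, j)

/-- Partial trace over the second tensor factor. -/
noncomputable def ptraceSnd {α β : Type} [Fintype β] (X : Matrix (α × β) (α × β) Complex) :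
    Matrix α α Complex :=
  Matrix.of fun i j => ∑ b : β, X (i, b) (j, b)

/-- The extension of a map on matrices by the identity on an auxiliary space. -/
noncomputable def extendId {i k : Type} (f : Matrix i i Complex → Matrix k k Complex)
    (α : Type) (X : Matrix (i × α) (i × α) Complex) : Matrix (k × α) (k × α) Complex :=
  Matrix.of fun p q => f (Matrix.of fun a b => X (a, p.2) (b, q.2)) p.1 q.1

/-- Complete positivity: all extensions by an identity map PSD matrices to PSD matrices. -/
def IsCompletelyPositive {i k : Type} [Fintype i] [DecidableEq i] [Fintype k] [DecidableEq k]
    (f : Matrix i i Complex → Matrix k k Complex) : Prop :=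
  ∀ (r : ℕ) (X : Matrix (i × Fin r) (i × Fin r) Complex), X.PosSemidef →
    (extendId f (Fin r) X).PosSemidef

/-- Trace preservation. -/
def IsTracePreserving {i k : Type} [Fintype i] [Fintype k]
    (f : Matrix i i Complex → Matrix k k Complex) : Prop :=
  ∀ X : Matrix i i Complex, (f X).trace = X.trace

/-- The diamond norm: the supremum of the trace norms of (f tensor I)(X) over all X of
trace norm one, with the identity on an auxiliary space of the same dimension as the input. -/
noncomputable def dnorm {i k : Type} [Fintype i] [DecidableEq i] [Fintype k] [DecidableEq k]
    (f : Matrix i i Complex → Matrix k k Complex) : Real :=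
  sSup {t : Real | ∃ X : Matrix (i × i) (i × i) Complex,
    traceNorm X = 1 ∧ t = traceNorm (extendId f i X)}

set_option linter.unusedSectionVars false
set_option maxHeartbeats 1000000
open scoped MatrixOrder
section FVGHelpers
section helpers
variable {n : Type} [Fintype n] [DecidableEq n]

lemma sqrtM_eq {A : Matrix n n ℂ} (h : A.PosSemidef) : sqrtM A =
    (h.1.eigenvectorUnitary : Matrix n n ℂ) * Matrix.diagonal ((↑) ∘ (√·) ∘ h.1.eigenvalues) *
      star (h.1.eigenvectorUnitary : Matrix n n ℂ) := by
  simp only [sqrtM]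
  exact dif_pos h

lemma sqrtM_eq_cfc {A : Matrix n n ℂ} (h : A.PosSemidef) : sqrtM A = CFC.sqrt A := by
  rw [sqrtM_eq h, CFC.sqrt_eq_cfc, cfc_nnreal_eq_real _ A h.nonneg, h.1.cfc_eq]
  simp only [Matrix.IsHermitian.cfc, Unitary.conjStarAlgAut_apply]
  congr 3
  funext i
  simp [h.eigenvalues_nonneg i]

lemma sqrtM_posSemidef {A : Matrix n n ℂ} (h : A.PosSemidef) : (sqrtM A).PosSemidef := by
  rw [sqrtM_eq_cfc h]; exact Matrix.nonneg_iff_posSemidef.mp (CFC.sqrt_nonneg A)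

lemma sqrtM_mul_self {A : Matrix n n ℂ} (h : A.PosSemidef) : sqrtM A * sqrtM A = A := by
  rw [sqrtM_eq_cfc h]; exact CFC.sqrt_mul_sqrt_self A h.nonneg

lemma sqrtM_herm {A : Matrix n n ℂ} (h : A.PosSemidef) : (sqrtM A)ᴴ = sqrtM A :=
  (sqrtM_posSemidef h).1

/-- trace of a PSD matrix is nonneg (real part) -/
lemma psd_trace_re_nonneg {A : Matrix n n ℂ} (h : A.PosSemidef) : 0 ≤ A.trace.re := by
  rw [Matrix.trace, Complex.re_sum]
  refine Finset.sum_nonneg fun i _ => ?_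
  have := h.re_dotProduct_nonneg (Pi.single i 1)
  simpa [dotProduct, Matrix.mulVec, Pi.single_apply, Matrix.diag] using this

lemma psd_trace_mul_re_nonneg {A B : Matrix n n ℂ} (hA : A.PosSemidef) (hB : B.PosSemidef) :
    0 ≤ (A * B).trace.re := by
  have h1 : A * B = sqrtM A * (sqrtM A * B) := by
    rw [← Matrix.mul_assoc, sqrtM_mul_self hA]
  have h2 : (A * B).trace = (sqrtM A * B * sqrtM A).trace := by
    rw [h1, Matrix.trace_mul_comm, Matrix.mul_assoc]
  rw [h2]
  have : (sqrtM A * B * sqrtM A).PosSemidef := by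
    have := hB.mul_mul_conjTranspose_same (sqrtM A)
    rwa [sqrtM_herm hA] at this
  exact psd_trace_re_nonneg this

end helpers

section h2
variable {n : Type} [Fintype n] [DecidableEq n]

lemma trace_conj_eq (V X : Matrix n n ℂ) (hV : star V * V = 1) :
    (V * X * star V).trace = X.trace := by
  rw [Matrix.trace_mul_cycle, hV, Matrix.one_mul]

lemma conj_diag_mul (V : Matrix n n ℂ) (hV : star V * V = 1) (a b : n → ℂ) :
    (V * Matrix.diagonal a * star V) * (V * Matrix.diagonal b * star V)
      = V * Matrix.diagonal (a * b) * star V := by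
  have : (V * Matrix.diagonal a * star V) * (V * Matrix.diagonal b * star V)
      = V * Matrix.diagonal a * (star V * V) * Matrix.diagonal b * star V := by
    simp only [Matrix.mul_assoc]
  rw [this, hV, Matrix.mul_one, Matrix.mul_assoc _ (Matrix.diagonal a),
    Matrix.diagonal_mul_diagonal]
  rfl

lemma trace_unitary_conj_diag (V : Matrix n n ℂ) (hV : star V * V = 1) (f : n → ℂ) :
    (V * Matrix.diagonal f * star V).trace = ∑ i, f i := by
  rw [trace_conj_eq _ _ hV, Matrix.trace_diagonal]

lemma sqrtM_trace {A : Matrix n n ℂ} (hA : A.PosSemidef) :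
    (sqrtM A).trace = ∑ i, (Real.sqrt (hA.1.eigenvalues i) : ℂ) := by
  rw [sqrtM_eq hA]
  rw [trace_unitary_conj_diag _ (by
    simpa [Matrix.star_eq_conjTranspose] using
      (Matrix.mem_unitaryGroup_iff'.mp (hA.1.eigenvectorUnitary).2))]
  rfl

end h2

open scoped ComplexOrder Matrix ComplexConjugate
section h3
variable {n : Type} [Fintype n] [DecidableEq n]

/-- Cauchy–Schwarz for the complex dot product. -/
lemma cs_dot (x y : n → ℂ) :
    ‖dotProduct (star x) y‖ ≤
      Real.sqrt (dotProduct (star x) x).re * Real.sqrt (dotProduct (star y) y).re := by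
  have h := norm_inner_le_norm (𝕜 := ℂ) ((WithLp.equiv 2 (n → ℂ)).symm x)
    ((WithLp.equiv 2 (n → ℂ)).symm y)
  rw [WithLp.equiv_symm_apply, EuclideanSpace.inner_toLp_toLp, dotProduct_comm] at h
  have hx : ‖(WithLp.equiv 2 (n → ℂ)).symm x‖ = Real.sqrt (dotProduct (star x) x).re := by
    rw [← Real.sqrt_sq (norm_nonneg _)]
    congr 1
    have := inner_self_eq_norm_sq (𝕜 := ℂ) ((WithLp.equiv 2 (n → ℂ)).symm x)
    rw [WithLp.equiv_symm_apply, EuclideanSpace.inner_toLp_toLp, dotProduct_comm] at this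
    rw [WithLp.equiv_symm_apply, ← this]
    exact RCLike.re_to_complex.symm
  have hy : ‖(WithLp.equiv 2 (n → ℂ)).symm y‖ = Real.sqrt (dotProduct (star y) y).re := by
    rw [← Real.sqrt_sq (norm_nonneg _)]
    congr 1
    have := inner_self_eq_norm_sq (𝕜 := ℂ) ((WithLp.equiv 2 (n → ℂ)).symm y)
    rw [WithLp.equiv_symm_apply, EuclideanSpace.inner_toLp_toLp, dotProduct_comm] at this
    rw [WithLp.equiv_symm_apply, ← this]
    exact RCLike.re_to_complex.symm
  rw [WithLp.equiv_symm_apply] at hx hy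
  rw [hx, hy] at h
  exact h
end h3

section h4
variable {n : Type} [Fintype n] [DecidableEq n]

lemma conj_entry (V A : Matrix n n ℂ) (i j : n) :
    (star V * A * V) i j
      = dotProduct (star (fun k => V k i)) (A *ᵥ (fun k => V k j)) := by
  simp only [Matrix.mul_apply, Matrix.mulVec, dotProduct, Matrix.star_apply,
    Matrix.star_eq_conjTranspose, Matrix.conjTranspose_apply, Finset.sum_mul, Finset.mul_sum,
    Pi.star_apply, RCLike.star_def]
  rw [Finset.sum_comm]
  apply Finset.sum_congr rfl; intro k _
  apply Finset.sum_congr rfl; intro l _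
  ring

lemma dot_mulVec_shift (G : Matrix n n ℂ) (x w : n → ℂ) :
    dotProduct (star x) (G *ᵥ w)
      = dotProduct (star ((star G) *ᵥ x)) w := by
  rw [Matrix.star_mulVec, Matrix.dotProduct_mulVec, Matrix.star_eq_conjTranspose,
    Matrix.conjTranspose_conjTranspose]

lemma dot_self_mulVec (M : Matrix n n ℂ) (v : n → ℂ) :
    dotProduct (star (M *ᵥ v)) (M *ᵥ v)
      = dotProduct (star v) ((Mᴴ * M) *ᵥ v) := by
  rw [Matrix.star_mulVec, Matrix.dotProduct_mulVec, Matrix.vecMul_vecMul,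
    ← Matrix.dotProduct_mulVec]

lemma dot_unit_eigen {A : Matrix n n ℂ} (hA : A.IsHermitian) (i : n) :
    dotProduct (star ⇑(hA.eigenvectorBasis i)) (⇑(hA.eigenvectorBasis i))
      = 1 := by
  have hnorm := hA.eigenvectorBasis.orthonormal.1 i
  have h2 : (inner ℂ (hA.eigenvectorBasis i) (hA.eigenvectorBasis i) : ℂ) = 1 := by
    rw [inner_self_eq_norm_sq_to_K, hnorm]
    norm_num
  rw [EuclideanSpace.inner_eq_star_dotProduct, dotProduct_comm] at h2
  exact h2

end h4

section h5
variable {n : Type} [Fintype n] [DecidableEq n]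

lemma traceNorm_eq_sum (M : Matrix n n ℂ) :
    traceNorm M = ∑ i, Real.sqrt ((Matrix.posSemidef_conjTranspose_mul_self M).1.eigenvalues i) := by
  rw [traceNorm, sqrtM_trace (Matrix.posSemidef_conjTranspose_mul_self M), Complex.re_sum]
  simp

lemma traceNorm_nonneg' (M : Matrix n n ℂ) : 0 ≤ traceNorm M := by
  rw [traceNorm_eq_sum]
  exact Finset.sum_nonneg fun i _ => Real.sqrt_nonneg _

/-- Key lemma: for `G` with `G * Gᴴ = 1`, `Re tr (G M) ≤ ‖M‖₁`. -/
lemma re_trace_mul_le_traceNorm (G M : Matrix n n ℂ) (hG : G * star G = 1) :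
    ((G * M).trace).re ≤ traceNorm M := by
  set hH := Matrix.posSemidef_conjTranspose_mul_self M with hHdef
  set V : Matrix n n ℂ := (hH.1.eigenvectorUnitary : Matrix n n ℂ) with hV
  have hVu : star V * V = 1 := by
    simpa [Matrix.star_eq_conjTranspose] using
      (Matrix.mem_unitaryGroup_iff'.mp (hH.1.eigenvectorUnitary).2)
  have hVu' : V * star V = 1 := by
    simpa [Matrix.star_eq_conjTranspose] using
      (Matrix.mem_unitaryGroup_iff.mp (hH.1.eigenvectorUnitary).2)
  have htr : (G * M).trace = (star V * (G * M) * V).trace := by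
    have := trace_conj_eq (star V) (G * M) (by rwa [star_star])
    rw [← this, star_star]
  rw [htr, Matrix.trace, Complex.re_sum, traceNorm_eq_sum]
  refine Finset.sum_le_sum fun i _ => ?_
  have hdiag : (star V * (G * M) * V).diag i
      = dotProduct (star ((star G) *ᵥ ⇑(hH.1.eigenvectorBasis i)))
        (M *ᵥ ⇑(hH.1.eigenvectorBasis i)) := by
    rw [Matrix.diag_apply, conj_entry]
    have hcol : (fun k => V k i) = ⇑(hH.1.eigenvectorBasis i) := by
      funext k
      exact Matrix.IsHermitian.eigenvectorUnitary_apply _ k i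
    rw [hcol, ← Matrix.mulVec_mulVec, dot_mulVec_shift]
  rw [hdiag]
  set v := ⇑(hH.1.eigenvectorBasis i) with hv
  calc (dotProduct (star ((star G) *ᵥ v)) (M *ᵥ v)).re
      ≤ ‖dotProduct (star ((star G) *ᵥ v)) (M *ᵥ v)‖ := Complex.re_le_norm _
    _ ≤ Real.sqrt (dotProduct (star ((star G) *ᵥ v)) ((star G) *ᵥ v)).re *
        Real.sqrt (dotProduct (star (M *ᵥ v)) (M *ᵥ v)).re := cs_dot _ _
    _ = Real.sqrt (hH.1.eigenvalues i) := by
        have h1 : dotProduct (star ((star G) *ᵥ v)) ((star G) *ᵥ v)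
            = dotProduct (star v) v := by
          rw [dot_self_mulVec]
          have : (star G)ᴴ * star G = 1 := by
            rw [Matrix.star_eq_conjTranspose, Matrix.conjTranspose_conjTranspose]
            rw [Matrix.star_eq_conjTranspose] at hG
            exact hG
          rw [this, Matrix.one_mulVec]
        have h2 : dotProduct (star (M *ᵥ v)) (M *ᵥ v)
            = (hH.1.eigenvalues i : ℂ) := by
          rw [dot_self_mulVec, hv, Matrix.IsHermitian.mulVec_eigenvectorBasis,
            dotProduct_smul, dot_unit_eigen]
          simp [Complex.real_smul]
        rw [h1, h2, dot_unit_eigen]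
        simp [Real.sqrt_nonneg]
end h5

section h6
variable {n : Type} [Fintype n] [DecidableEq n]

lemma fidelity_eq_traceNorm {ρ ξ : Matrix n n ℂ} (hρ : ρ.PosSemidef) (hξ : ξ.PosSemidef) :
    fidelity ρ ξ = traceNorm (sqrtM ξ * sqrtM ρ) := by
  have key : (sqrtM ξ * sqrtM ρ)ᴴ * (sqrtM ξ * sqrtM ρ) = sqrtM ρ * ξ * sqrtM ρ := by
    rw [Matrix.conjTranspose_mul, sqrtM_herm hρ, sqrtM_herm hξ]
    have inner : sqrtM ξ * (sqrtM ξ * sqrtM ρ) = ξ * sqrtM ρ := by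
      rw [← Matrix.mul_assoc, sqrtM_mul_self hξ]
    rw [Matrix.mul_assoc, inner, ← Matrix.mul_assoc]
  rw [fidelity, traceNorm, key]

lemma trace_diag_mul (d : n → ℂ) (X : Matrix n n ℂ) :
    (Matrix.diagonal d * X).trace = ∑ i, d i * X i i := by
  simp [Matrix.trace, Matrix.diag, Matrix.diagonal_mul]

/-- Powers–Størmer-type inequality. -/
lemma powers_stormer {ρ ξ : Matrix n n ℂ} (hρ : ρ.PosSemidef) (hξ : ξ.PosSemidef) :
    (ρ.trace).re + (ξ.trace).re - 2 * ((sqrtM ρ * sqrtM ξ).trace).re ≤ traceNorm (ρ - ξ) := by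
  set a := sqrtM ρ with ha
  set b := sqrtM ξ with hb
  have haa : a * a = ρ := sqrtM_mul_self hρ
  have hbb : b * b = ξ := sqrtM_mul_self hξ
  have haP : a.PosSemidef := sqrtM_posSemidef hρ
  have hbP : b.PosSemidef := sqrtM_posSemidef hξ
  set S := a - b with hSdef
  set T := a + b with hTdef
  have hS : S.IsHermitian := haP.1.sub hbP.1
  set W : Matrix n n ℂ := (hS.eigenvectorUnitary : Matrix n n ℂ) with hW
  set lam := hS.eigenvalues with hlam
  set absl : n → ℝ := fun i => |lam i| with habsl
  have hWu : star W * W = 1 := by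
    simpa [Matrix.star_eq_conjTranspose] using
      (Matrix.mem_unitaryGroup_iff'.mp (hS.eigenvectorUnitary).2)
  have hWu' : W * star W = 1 := by
    simpa [Matrix.star_eq_conjTranspose] using
      (Matrix.mem_unitaryGroup_iff.mp (hS.eigenvectorUnitary).2)
  set σ : n → ℝ := fun i => if lam i < 0 then (-1 : ℝ) else 1 with hσ
  set G := W * Matrix.diagonal (fun i => (σ i : ℂ)) * star W with hG
  have hDstar : star (Matrix.diagonal (fun i => (σ i : ℂ)))
      = Matrix.diagonal (fun i => (σ i : ℂ)) := by
    have hstf : (star fun i => ((σ i : ℝ) : ℂ)) = fun i => ((σ i : ℝ) : ℂ) := by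
      funext i
      show star ((σ i : ℝ) : ℂ) = ((σ i : ℝ) : ℂ)
      rw [Complex.star_def]
      exact Complex.conj_ofReal _
    rw [Matrix.star_eq_conjTranspose, Matrix.diagonal_conjTranspose, hstf]
  have hGstar : star G = G := by
    rw [hG, star_mul, star_mul, star_star, hDstar, Matrix.mul_assoc]
  have hGu : G * star G = 1 := by
    rw [hGstar, hG, conj_diag_mul _ hWu]
    have hone : ((fun i => (σ i : ℂ)) * fun i => (σ i : ℂ)) = fun _ => (1 : ℂ) := by
      funext i
      simp only [Pi.mul_apply]
      rw [hσ]
      by_cases h : lam i < 0 <;> simp [h]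
    rw [hone, Matrix.diagonal_one, Matrix.mul_one, hWu']
  have hSspec : S = W * Matrix.diagonal (fun i => (lam i : ℂ)) * star W := by
    have := hS.spectral_theorem
    rw [Unitary.conjStarAlgAut_apply, ← hW, ← hlam] at this
    exact this
  have hfun : ((fun i => (σ i : ℂ)) * fun i => (lam i : ℂ)) = fun i => (absl i : ℂ) := by
    funext i
    simp only [Pi.mul_apply, habsl, hσ]
    by_cases h : lam i < 0
    · rw [if_pos h, abs_of_neg h]
      push_cast
      ring
    · rw [if_neg h, abs_of_nonneg (le_of_not_gt h)]
      push_cast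
      ring
  have hGS : G * S = W * Matrix.diagonal (fun i => (absl i : ℂ)) * star W := by
    rw [hG, hSspec, conj_diag_mul _ hWu, hfun]
  have hSG : S * G = G * S := by
    rw [hG, hSspec, conj_diag_mul _ hWu, conj_diag_mul _ hWu,
      mul_comm (fun i => ((lam i : ℝ) : ℂ)) (fun i => ((σ i : ℝ) : ℂ))]
  have hST : S * T + T * S = (ρ - ξ) + (ρ - ξ) := by
    have expand : (a - b) * (a + b) + (a + b) * (a - b)
        = (a * a - b * b) + (a * a - b * b) := by noncomm_ring
    rw [hSdef, hTdef, expand, haa, hbb]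
  have htrG : (G * (ρ - ξ)).trace + (G * (ρ - ξ)).trace
      = ((G * S) * T).trace + ((G * S) * T).trace := by
    have h1 : (G * (ρ - ξ)).trace + (G * (ρ - ξ)).trace = (G * (S * T + T * S)).trace := by
      rw [hST, Matrix.mul_add, Matrix.trace_add]
    rw [h1, Matrix.mul_add, Matrix.trace_add, ← Matrix.mul_assoc, ← Matrix.mul_assoc G T S]
    congr 1
    rw [Matrix.trace_mul_cycle G T S, hSG]
  have htrace : ((G * S) * T).trace = ∑ i, ((absl i : ℂ) * ((star W * T * W) i i)) := by
    rw [hGS]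
    rw [Matrix.trace_mul_cycle (W * Matrix.diagonal (fun i => (absl i : ℂ))) (star W) T,
      Matrix.trace_mul_cycle T (W * Matrix.diagonal (fun i => (absl i : ℂ))) (star W)]
    rw [← Matrix.mul_assoc, Matrix.trace_mul_comm, trace_diag_mul]
  have hkey : ∑ i, (lam i) ^ 2 ≤ (((G * S) * T).trace).re := by
    rw [htrace, Complex.re_sum]
    refine Finset.sum_le_sum fun i _ => ?_
    have hentry : (star W * T * W) i i
        = dotProduct (star ⇑(hS.eigenvectorBasis i)) (T *ᵥ ⇑(hS.eigenvectorBasis i)) := by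
      rw [conj_entry]
      have hcol : (fun k => W k i) = ⇑(hS.eigenvectorBasis i) := by
        funext k
        exact Matrix.IsHermitian.eigenvectorUnitary_apply _ k i
      rw [hcol]
    set v := ⇑(hS.eigenvectorBasis i) with hv
    have hTv : (dotProduct (star v) (T *ᵥ v)).re
        = (dotProduct (star v) (a *ᵥ v)).re + (dotProduct (star v) (b *ᵥ v)).re := by
      rw [hTdef, Matrix.add_mulVec, dotProduct_add, Complex.add_re]
    have hSv : (dotProduct (star v) (a *ᵥ v)).re
        - (dotProduct (star v) (b *ᵥ v)).re = lam i := by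
      have h1 : dotProduct (star v) (S *ᵥ v) = (lam i : ℂ) := by
        rw [hv, Matrix.IsHermitian.mulVec_eigenvectorBasis, dotProduct_smul,
          dot_unit_eigen]
        simp [Complex.real_smul, hlam]
      have h2 : dotProduct (star v) (S *ᵥ v)
          = dotProduct (star v) (a *ᵥ v) - dotProduct (star v) (b *ᵥ v) := by
        rw [hSdef, Matrix.sub_mulVec, dotProduct_sub]
      rw [h2] at h1
      have := congrArg Complex.re h1
      simpa using this
    have hpa : 0 ≤ (dotProduct (star v) (a *ᵥ v)).re := haP.re_dotProduct_nonneg v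
    have hpb : 0 ≤ (dotProduct (star v) (b *ᵥ v)).re := hbP.re_dotProduct_nonneg v
    have habs : absl i ≤ (dotProduct (star v) (T *ᵥ v)).re := by
      rw [hTv, habsl]
      rcases abs_cases (lam i) with ⟨h, _⟩ | ⟨h, _⟩ <;> simp only [h] <;> linarith
    have hmulre : ((absl i : ℂ) * ((star W * T * W) i i)).re
        = absl i * ((star W * T * W) i i).re := by
      simp [Complex.mul_re]
    rw [hmulre, hentry]
    calc (lam i) ^ 2 = absl i * absl i := by rw [habsl]; simp [abs_mul_abs_self, sq]
      _ ≤ absl i * (dotProduct (star v) (T *ᵥ v)).re :=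
          mul_le_mul_of_nonneg_left habs (abs_nonneg _)
  have hSS : ((S * S).trace).re = ∑ i, (lam i) ^ 2 := by
    have hrw : S * S
        = W * Matrix.diagonal ((fun i => (lam i : ℂ)) * (fun i => (lam i : ℂ))) * star W := by
      rw [hSspec, conj_diag_mul _ hWu]
    rw [hrw, trace_unitary_conj_diag _ hWu, Complex.re_sum]
    apply Finset.sum_congr rfl
    intro i _
    simp [← Complex.ofReal_mul, sq]
  have hSSexp : ((S * S).trace).re
      = (ρ.trace).re + (ξ.trace).re - 2 * ((a * b).trace).re := by
    have expand : (a - b) * (a - b) = (a * a + b * b) - (a * b + b * a) := by noncomm_ring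
    have htr : (S * S).trace = ρ.trace + ξ.trace - ((a * b).trace + (b * a).trace) := by
      rw [hSdef, expand, Matrix.trace_sub, Matrix.trace_add, Matrix.trace_add, haa, hbb]
    rw [htr, Matrix.trace_mul_comm b a]
    simp only [Complex.sub_re, Complex.add_re]
    ring
  have hfinal := re_trace_mul_le_traceNorm G (ρ - ξ) hGu
  have h2 : ((G * (ρ - ξ)).trace).re = (((G * S) * T).trace).re := by
    have := congrArg Complex.re htrG
    simp only [Complex.add_re] at this
    linarith
  linarith [hkey, h2, hfinal, hSS, hSSexp]
end h6

section h7
variable {n : Type} [Fintype n] [DecidableEq n]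

lemma trace_conjTranspose_mul (A B : Matrix n n ℂ) :
    (Aᴴ * B).trace = dotProduct (star (fun p : n × n => A p.1 p.2))
      (fun p : n × n => B p.1 p.2) := by
  rw [Matrix.trace]
  simp only [Matrix.diag, Matrix.mul_apply, Matrix.conjTranspose_apply, dotProduct,
    Pi.star_apply]
  rw [Fintype.sum_prod_type]
  exact Finset.sum_comm

lemma frobenius_cs (X Y : Matrix n n ℂ) :
    ‖(Xᴴ * Y).trace‖ ≤ Real.sqrt ((Xᴴ * X).trace).re * Real.sqrt ((Yᴴ * Y).trace).re := by
  rw [trace_conjTranspose_mul, trace_conjTranspose_mul, trace_conjTranspose_mul]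
  exact cs_dot _ _

/-- Lower Fuchs–van de Graaf bound. -/
lemma fvg_lower {ρ ξ : Matrix n n ℂ} (hρ : ρ.PosSemidef) (hρtr : ρ.trace = 1)
    (hξ : ξ.PosSemidef) (hξtr : ξ.trace = 1) :
    1 - (1 / 2) * traceNorm (ρ - ξ) ≤ fidelity ρ ξ := by
  have hps := powers_stormer hρ hξ
  rw [hρtr, hξtr] at hps
  simp only [Complex.one_re] at hps
  have hF : ((sqrtM ρ * sqrtM ξ).trace).re ≤ fidelity ρ ξ := by
    rw [fidelity_eq_traceNorm hρ hξ]
    have := re_trace_mul_le_traceNorm 1 (sqrtM ξ * sqrtM ρ) (by simp)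
    rw [Matrix.one_mul] at this
    rw [Matrix.trace_mul_comm] at this
    exact this
  linarith
end h7

section h8
variable {n : Type} [Fintype n] [DecidableEq n]

lemma proj_psd {P : Matrix n n ℂ} (hPh : Pᴴ = P) (hPP : P * P = P) : P.PosSemidef := by
  have h : P = Pᴴ * P := by rw [hPh, hPP]
  rw [h]
  exact Matrix.posSemidef_conjTranspose_mul_self P

lemma trace_conj_eq' (V X : Matrix n n ℂ) (hV : star V * V = 1) :
    (star V * X * V).trace = X.trace := by
  rw [Matrix.trace_mul_cycle (star V) X V, mul_eq_one_comm.mp hV, Matrix.one_mul]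

lemma part_bound {ρ ξ : Matrix n n ℂ} (hρ : ρ.PosSemidef) (hξ : ξ.PosSemidef)
    {P N V : Matrix n n ℂ} (hPh : Pᴴ = P) (hPP : P * P = P)
    (hNQ : (1 - N * Nᴴ).PosSemidef) (hV : star V * V = 1) :
    ((Nᴴ * (sqrtM ξ * P * sqrtM ρ * V)).trace).re
      ≤ Real.sqrt ((P * ξ).trace).re * Real.sqrt ((P * ρ).trace).re := by
  set a := sqrtM ρ with ha
  set b := sqrtM ξ with hb
  have hah : aᴴ = a := sqrtM_herm hρ
  have hbh : bᴴ = b := sqrtM_herm hξ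
  have haa : a * a = ρ := sqrtM_mul_self hρ
  have hbb : b * b = ξ := sqrtM_mul_self hξ
  set X := P * (b * N) with hX
  set Y := P * (a * V) with hY
  have hcollapse : ∀ B : Matrix n n ℂ, P * (P * B) = P * B := fun B => by
    rw [← Matrix.mul_assoc, hPP]
  have hXY : Xᴴ * Y = Nᴴ * (b * P * a * V) := by
    rw [hX, hY, Matrix.conjTranspose_mul, Matrix.conjTranspose_mul, hPh, hbh]
    simp only [Matrix.mul_assoc]
    rw [hcollapse]
  have htrY : (Yᴴ * Y).trace = (P * ρ).trace := by
    rw [hY, Matrix.conjTranspose_mul, Matrix.conjTranspose_mul, hPh, hah]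
    simp only [Matrix.mul_assoc]
    rw [hcollapse]
    have hassoc : Vᴴ * (a * (P * (a * V))) = star V * (a * (P * a)) * V := by
      rw [Matrix.star_eq_conjTranspose]
      simp only [Matrix.mul_assoc]
    rw [hassoc, trace_conj_eq' V _ hV, Matrix.trace_mul_comm a (P * a), Matrix.mul_assoc P a a, haa]
  have htrX : ((Xᴴ * X).trace).re ≤ ((P * ξ).trace).re := by
    have hXXtr : (Xᴴ * X).trace = ((b * P * bᴴ) * (N * Nᴴ)).trace := by
      rw [hX, Matrix.conjTranspose_mul, Matrix.conjTranspose_mul, hPh, hbh]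
      simp only [Matrix.mul_assoc]
      rw [hcollapse, Matrix.trace_mul_comm]
      simp only [Matrix.mul_assoc]
    have hC : (b * P * bᴴ).PosSemidef := (proj_psd hPh hPP).mul_mul_conjTranspose_same b
    have hdiff := psd_trace_mul_re_nonneg hC hNQ
    have hsub : ((b * P * bᴴ) * (1 - N * Nᴴ)).trace
        = ((b * P * bᴴ)).trace - ((b * P * bᴴ) * (N * Nᴴ)).trace := by
      rw [Matrix.mul_sub, Matrix.mul_one, Matrix.trace_sub]
    have htrC : ((b * P * bᴴ)).trace = (P * ξ).trace := by
      rw [hbh, Matrix.trace_mul_comm (b * P) b, ← Matrix.mul_assoc, hbb, Matrix.trace_mul_comm]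
    rw [hXXtr]
    rw [hsub, htrC] at hdiff
    simp only [Complex.sub_re] at hdiff
    linarith
  calc ((Nᴴ * (b * P * a * V)).trace).re
      ≤ ‖(Nᴴ * (b * P * a * V)).trace‖ := Complex.re_le_norm _
    _ = ‖(Xᴴ * Y).trace‖ := by rw [hXY]
    _ ≤ Real.sqrt ((Xᴴ * X).trace).re * Real.sqrt ((Yᴴ * Y).trace).re := frobenius_cs X Y
    _ ≤ Real.sqrt ((P * ξ).trace).re * Real.sqrt ((P * ρ).trace).re := by
        apply mul_le_mul
        · exact Real.sqrt_le_sqrt htrX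
        · rw [htrY]
        · exact Real.sqrt_nonneg _
        · exact Real.sqrt_nonneg _
end h8

section h9
variable {n : Type} [Fintype n] [DecidableEq n]

lemma star_real_fun (f : n → ℝ) : (star fun i => ((f i : ℝ) : ℂ)) = fun i => ((f i : ℝ) : ℂ) := by
  funext i
  show star ((f i : ℝ) : ℂ) = ((f i : ℝ) : ℂ)
  rw [Complex.star_def]
  exact Complex.conj_ofReal _

lemma diag_real_herm (f : n → ℝ) :
    (Matrix.diagonal (fun i => ((f i : ℝ) : ℂ)))ᴴ = Matrix.diagonal (fun i => ((f i : ℝ) : ℂ)) := by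
  rw [Matrix.diagonal_conjTranspose, star_real_fun]

lemma fidelity_measurement {ρ ξ : Matrix n n ℂ} (hρ : ρ.PosSemidef) (hξ : ξ.PosSemidef)
    {P : Matrix n n ℂ} (hPh : Pᴴ = P) (hPP : P * P = P) :
    fidelity ρ ξ ≤ Real.sqrt ((P * ξ).trace).re * Real.sqrt ((P * ρ).trace).re
      + Real.sqrt (((1 - P) * ξ).trace).re * Real.sqrt (((1 - P) * ρ).trace).re := by
  set a := sqrtM ρ with ha
  set b := sqrtM ξ with hb
  set M := b * a with hM
  set hH := Matrix.posSemidef_conjTranspose_mul_self M with hHdef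
  set V : Matrix n n ℂ := (hH.1.eigenvectorUnitary : Matrix n n ℂ) with hV
  set d := hH.1.eigenvalues with hd
  have hdnn : ∀ i, 0 ≤ d i := fun i => hH.eigenvalues_nonneg i
  have hVu : star V * V = 1 := by
    simpa [Matrix.star_eq_conjTranspose] using
      (Matrix.mem_unitaryGroup_iff'.mp (hH.1.eigenvectorUnitary).2)
  have hdiagH : star V * (Mᴴ * M) * V = Matrix.diagonal (fun i => ((d i : ℝ) : ℂ)) :=
    by
      have := hH.1.conjStarAlgAut_star_eigenvectorUnitary
      rwa [Unitary.conjStarAlgAut_apply, Unitary.coe_star, star_star] at this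
  have hdiagH' : star V * (Mᴴ * (M * V)) = Matrix.diagonal (fun i => ((d i : ℝ) : ℂ)) := by
    rw [← hdiagH]
    simp only [Matrix.mul_assoc]
  set g : n → ℝ := fun i => if d i = 0 then 0 else (Real.sqrt (d i))⁻¹ with hg
  set e : n → ℝ := fun i => if d i = 0 then 0 else 1 with he
  set N := M * V * Matrix.diagonal (fun i => ((g i : ℝ) : ℂ)) with hN
  have hNh : Nᴴ = Matrix.diagonal (fun i => ((g i : ℝ) : ℂ)) * (star V * Mᴴ) := by
    rw [hN, Matrix.conjTranspose_mul, Matrix.conjTranspose_mul, diag_real_herm,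
      Matrix.star_eq_conjTranspose]
  have hNMV : Nᴴ * (M * V) = Matrix.diagonal (fun i => ((Real.sqrt (d i) : ℝ) : ℂ)) := by
    rw [hNh]
    simp only [Matrix.mul_assoc]
    rw [hdiagH', Matrix.diagonal_mul_diagonal]
    apply congrArg Matrix.diagonal
    funext i
    by_cases h : d i = 0
    · simp [hg, h]
    · have hdpos : 0 < d i := lt_of_le_of_ne (hdnn i) (Ne.symm h)
      have hs : Real.sqrt (d i) ≠ 0 := by positivity
      simp only [hg, if_neg h]
      rw [← Complex.ofReal_mul]
      congr 1
      rw [← Real.mul_self_sqrt (hdnn i)]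
      field_simp
      rw [Real.sqrt_sq (Real.sqrt_nonneg _)]
  have hFeq : fidelity ρ ξ = ((Nᴴ * (M * V)).trace).re := by
    rw [fidelity_eq_traceNorm hρ hξ, ← hb, ← ha, ← hM, traceNorm_eq_sum, hNMV,
      Matrix.trace_diagonal, Complex.re_sum]
    simp [hd]
  have hNN : Nᴴ * N = Matrix.diagonal (fun i => ((e i : ℝ) : ℂ)) := by
    rw [hN, ← Matrix.mul_assoc, hNMV, Matrix.diagonal_mul_diagonal]
    apply congrArg Matrix.diagonal
    funext i
    by_cases h : d i = 0
    · simp [hg, he, h]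
    · have hdpos : 0 < d i := lt_of_le_of_ne (hdnn i) (Ne.symm h)
      have hs : Real.sqrt (d i) ≠ 0 := by positivity
      simp only [hg, he, if_neg h]
      rw [← Complex.ofReal_mul]
      congr 1
      field_simp
  have hNe : N * Matrix.diagonal (fun i => ((e i : ℝ) : ℂ)) = N := by
    rw [hN, Matrix.mul_assoc, Matrix.diagonal_mul_diagonal]
    apply congrArg (fun D => M * V * D)
    apply congrArg Matrix.diagonal
    funext i
    by_cases h : d i = 0
    · simp [hg, he, h]
    · simp [hg, he, if_neg h]
  have hQQ : (N * Nᴴ) * (N * Nᴴ) = N * Nᴴ := by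
    have h1 : (N * Nᴴ) * (N * Nᴴ) = N * ((Nᴴ * N) * Nᴴ) := by simp only [Matrix.mul_assoc]
    rw [h1, hNN, ← Matrix.mul_assoc, hNe]
  have hQh : (1 - N * Nᴴ)ᴴ = 1 - N * Nᴴ := by
    rw [Matrix.conjTranspose_sub, Matrix.conjTranspose_one, Matrix.conjTranspose_mul,
      Matrix.conjTranspose_conjTranspose]
  have hQP : (1 - N * Nᴴ) * (1 - N * Nᴴ) = 1 - N * Nᴴ := by
    calc (1 - N * Nᴴ) * (1 - N * Nᴴ)
        = 1 - N * Nᴴ - N * Nᴴ + (N * Nᴴ) * (N * Nᴴ) := by noncomm_ring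
      _ = 1 - N * Nᴴ := by rw [hQQ]; abel
  have hQpsd : (1 - N * Nᴴ).PosSemidef := proj_psd hQh hQP
  have h1Ph : (1 - P)ᴴ = 1 - P := by
    rw [Matrix.conjTranspose_sub, Matrix.conjTranspose_one, hPh]
  have h1PP : (1 - P) * (1 - P) = 1 - P := by
    calc (1 - P) * (1 - P) = 1 - P - P + P * P := by noncomm_ring
      _ = 1 - P := by rw [hPP]; abel
  have hsplit : b * P * a * V + b * (1 - P) * a * V = M * V := by
    rw [hM]
    noncomm_ring
  have htr : ((Nᴴ * (M * V)).trace).re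
      = ((Nᴴ * (b * P * a * V)).trace).re + ((Nᴴ * (b * (1 - P) * a * V)).trace).re := by
    rw [← hsplit, Matrix.mul_add, Matrix.trace_add, Complex.add_re]
  have hb1 := part_bound hρ hξ hPh hPP hQpsd hVu
  have hb2 := part_bound hρ hξ h1Ph h1PP hQpsd hVu
  rw [hFeq, htr]
  rw [← ha, ← hb] at hb1 hb2
  linarith
end h9

section h10
variable {n : Type} [Fintype n] [DecidableEq n]

lemma conj_diag_herm (U : Matrix n n ℂ) (f : n → ℝ) :
    (U * Matrix.diagonal (fun i => ((f i : ℝ) : ℂ)) * star U)ᴴ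
      = U * Matrix.diagonal (fun i => ((f i : ℝ) : ℂ)) * star U := by
  rw [← Matrix.star_eq_conjTranspose, star_mul, star_mul, star_star,
    Matrix.star_eq_conjTranspose (Matrix.diagonal _), diag_real_herm, Matrix.mul_assoc]

lemma arith_bound (F p q : ℝ) (hq0 : 0 ≤ q) (hq1 : q ≤ 1) (hp0 : 0 ≤ p) (hp1 : p ≤ 1)
    (hF : F ≤ Real.sqrt q * Real.sqrt p + Real.sqrt (1 - q) * Real.sqrt (1 - p)) :
    F ≤ Real.sqrt (1 - (p - q) ^ 2) := by
  set c := Real.sqrt q * Real.sqrt p + Real.sqrt (1 - q) * Real.sqrt (1 - p) with hc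
  have hcnn : 0 ≤ c := by positivity
  have hq' : (Real.sqrt q) ^ 2 = q := Real.sq_sqrt hq0
  have hp' : (Real.sqrt p) ^ 2 = p := Real.sq_sqrt hp0
  have hq1' : (Real.sqrt (1 - q)) ^ 2 = 1 - q := Real.sq_sqrt (by linarith)
  have hp1' : (Real.sqrt (1 - p)) ^ 2 = 1 - p := Real.sq_sqrt (by linarith)
  have hcsq : c ^ 2 ≤ 1 - (p - q) ^ 2 := by
    have hx := sq_nonneg (Real.sqrt q * Real.sqrt (1 - q) - Real.sqrt p * Real.sqrt (1 - p))
    nlinarith [hx, hq', hp', hq1', hp1', sq_nonneg c]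
  calc F ≤ c := hF
    _ = Real.sqrt (c ^ 2) := (Real.sqrt_sq hcnn).symm
    _ ≤ Real.sqrt (1 - (p - q) ^ 2) := Real.sqrt_le_sqrt hcsq

/-- Upper Fuchs–van de Graaf bound. -/
lemma fvg_upper {ρ ξ : Matrix n n ℂ} (hρ : ρ.PosSemidef) (hρtr : ρ.trace = 1)
    (hξ : ξ.PosSemidef) (hξtr : ξ.trace = 1) :
    fidelity ρ ξ ≤ Real.sqrt (1 - (1 / 4) * traceNorm (ρ - ξ) ^ 2) := by
  have hΔ : (ρ - ξ).IsHermitian := hρ.1.sub hξ.1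
  set U : Matrix n n ℂ := (hΔ.eigenvectorUnitary : Matrix n n ℂ) with hU
  set μ := hΔ.eigenvalues with hμ
  have hUu : star U * U = 1 := by
    simpa [Matrix.star_eq_conjTranspose] using
      (Matrix.mem_unitaryGroup_iff'.mp (hΔ.eigenvectorUnitary).2)
  have hΔspec : ρ - ξ = U * Matrix.diagonal (fun i => ((μ i : ℝ) : ℂ)) * star U := by
    have := hΔ.spectral_theorem
    rw [Unitary.conjStarAlgAut_apply, ← hU, ← hμ] at this
    exact this
  set χ : n → ℝ := fun i => if 0 < μ i then (1 : ℝ) else 0 with hχ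
  set P := U * Matrix.diagonal (fun i => ((χ i : ℝ) : ℂ)) * star U with hP
  have hPh : Pᴴ = P := conj_diag_herm U χ
  have hPP : P * P = P := by
    rw [hP, conj_diag_mul _ hUu]
    apply congrArg (fun D => U * D * star U)
    apply congrArg Matrix.diagonal
    funext i
    simp only [Pi.mul_apply, hχ]
    by_cases h : 0 < μ i <;> simp [h]
  -- trace norm of the difference
  have hΔΔpsd : ((ρ - ξ)ᴴ * (ρ - ξ)).PosSemidef := Matrix.posSemidef_conjTranspose_mul_self _
  set B := U * Matrix.diagonal (fun i => ((|μ i| : ℝ) : ℂ)) * star U with hB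
  have hBpsd : B.PosSemidef := by
    have hdiag : (Matrix.diagonal (fun i => ((|μ i| : ℝ) : ℂ))).PosSemidef :=
      Matrix.posSemidef_diagonal_iff.mpr fun i => Complex.zero_le_real.mpr (abs_nonneg _)
    have := hdiag.mul_mul_conjTranspose_same U
    rwa [← Matrix.star_eq_conjTranspose] at this
  have hBsq : B ^ 2 = (ρ - ξ)ᴴ * (ρ - ξ) := by
    rw [hΔ.eq, pow_two, hB, conj_diag_mul _ hUu, hΔspec, conj_diag_mul _ hUu]
    apply congrArg (fun D => U * D * star U)
    apply congrArg Matrix.diagonal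
    funext i
    simp only [Pi.mul_apply]
    rw [← Complex.ofReal_mul, ← Complex.ofReal_mul, abs_mul_abs_self]
  have htnΔ : traceNorm (ρ - ξ) = ∑ i, |μ i| := by
    rw [traceNorm, sqrtM_eq_cfc hΔΔpsd,
      (CFC.sqrt_eq_iff _ _ hΔΔpsd.nonneg hBpsd.nonneg).mpr (by rw [← hBsq, pow_two]), hB,
      trace_unitary_conj_diag _ hUu, Complex.re_sum]
    simp
  -- trace of Delta is zero
  have hsum0 : ∑ i, μ i = 0 := by
    have h1 : (ρ - ξ).trace = 0 := by rw [Matrix.trace_sub, hρtr, hξtr, sub_self]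
    rw [hΔspec, trace_unitary_conj_diag _ hUu] at h1
    have h2 : ((∑ i, μ i : ℝ) : ℂ) = 0 := by
      rw [Complex.ofReal_sum]
      exact h1
    exact_mod_cast h2
  -- trace of P * Delta
  have htrPΔ : ((P * (ρ - ξ)).trace).re = ∑ i, max (μ i) 0 := by
    rw [hP, hΔspec, conj_diag_mul _ hUu, trace_unitary_conj_diag _ hUu, Complex.re_sum]
    apply Finset.sum_congr rfl
    intro i _
    simp only [Pi.mul_apply]
    rw [← Complex.ofReal_mul, Complex.ofReal_re, hχ]
    by_cases h : 0 < μ i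
    · simp [h, max_eq_left (le_of_lt h)]
    · simp [h, max_eq_right (le_of_not_gt h)]
  set p := ((P * ρ).trace).re with hpdef
  set q := ((P * ξ).trace).re with hqdef
  have hpq : p - q = ∑ i, max (μ i) 0 := by
    rw [← htrPΔ, Matrix.mul_sub, Matrix.trace_sub, Complex.sub_re]
  have htn2 : traceNorm (ρ - ξ) = 2 * (∑ i, max (μ i) 0) := by
    rw [htnΔ]
    have : ∀ i, |μ i| = 2 * max (μ i) 0 - μ i := by
      intro i
      rcases le_or_gt (μ i) 0 with h | h
      · rw [abs_of_nonpos h, max_eq_right h]; ring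
      · rw [abs_of_pos h, max_eq_left (le_of_lt h)]; ring
    rw [Finset.sum_congr rfl fun i _ => this i, Finset.sum_sub_distrib, hsum0,
      ← Finset.mul_sum]
    ring
  -- p, q in [0,1]
  have hPpsd : P.PosSemidef := proj_psd hPh hPP
  have h1Ph : (1 - P)ᴴ = 1 - P := by
    rw [Matrix.conjTranspose_sub, Matrix.conjTranspose_one, hPh]
  have h1PP : (1 - P) * (1 - P) = 1 - P := by
    calc (1 - P) * (1 - P) = 1 - P - P + P * P := by noncomm_ring
      _ = 1 - P := by rw [hPP]; abel
  have h1Ppsd : (1 - P).PosSemidef := proj_psd h1Ph h1PP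
  have hp0 : 0 ≤ p := psd_trace_mul_re_nonneg hPpsd hρ
  have hq0 : 0 ≤ q := psd_trace_mul_re_nonneg hPpsd hξ
  have h1p : ((1 - P) * ρ).trace.re = 1 - p := by
    rw [Matrix.sub_mul, Matrix.one_mul, Matrix.trace_sub, Complex.sub_re, hρtr]
    simp [hpdef]
  have h1q : ((1 - P) * ξ).trace.re = 1 - q := by
    rw [Matrix.sub_mul, Matrix.one_mul, Matrix.trace_sub, Complex.sub_re, hξtr]
    simp [hqdef]
  have hp1 : p ≤ 1 := by
    have := psd_trace_mul_re_nonneg h1Ppsd hρ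
    rw [h1p] at this
    linarith
  have hq1 : q ≤ 1 := by
    have := psd_trace_mul_re_nonneg h1Ppsd hξ
    rw [h1q] at this
    linarith
  -- measurement bound
  have hmeas := fidelity_measurement hρ hξ hPh hPP
  rw [h1p, h1q] at hmeas
  have harith := arith_bound (fidelity ρ ξ) p q hq0 hq1 hp0 hp1 hmeas
  have hfin : 1 - (1 / 4) * traceNorm (ρ - ξ) ^ 2 = 1 - (p - q) ^ 2 := by
    rw [htn2, hpq]
    ring
  rw [hfin]
  exact harith
end h10


end FVGHelpers

/-- Fuchs-van de Graaf inequalities: for density matrices the fidelity satisfies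
1 - (1/2)‖ρ - ξ‖_tr ≤ F(ρ, ξ) ≤ √(1 - (1/4)‖ρ - ξ‖_tr²). -/
theorem fidelity_traceNorm_bounds {n : ℕ} (ρ ξ : Matrix (Fin n) (Fin n) Complex)
    (hρ : ρ.PosSemidef) (hρtr : ρ.trace = 1) (hξ : ξ.PosSemidef) (hξtr : ξ.trace = 1) :
    1 - (1 / 2) * traceNorm (ρ - ξ) ≤ fidelity ρ ξ ∧
      fidelity ρ ξ ≤ Real.sqrt (1 - (1 / 4) * traceNorm (ρ - ξ) ^ 2) :=
  ⟨fvg_lower hρ hρtr hξ hξtr, fvg_upper hρ hρtr hξ hξtr⟩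
end

section
/- For density matrices ρ, ξ on H ⊗ K with purifications |ψ⟩, |φ⟩, one has ‖tr_H(|ψ⟩⟨φ|)‖_tr = max over unitaries U on K of |⟨φ|(I_H ⊗ U)|ψ⟩| (this maximum equals the fidelity by Uhlmann's theorem). -/
open scoped ComplexOrder Matrix

open Matrix in
/-- Singular value decomposition with nonnegative diagonal, and the trace norm as the
sum of the singular values. -/
lemma exists_svd {m : ℕ} (M : Matrix (Fin m) (Fin m) ℂ) :
    ∃ (A V : Matrix (Fin m) (Fin m) ℂ) (d : Fin m → ℝ),
      A ∈ Matrix.unitaryGroup (Fin m) ℂ ∧ V ∈ Matrix.unitaryGroup (Fin m) ℂ ∧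
      (∀ j, 0 ≤ d j) ∧
      M = A * Matrix.diagonal (fun j => (d j : ℂ)) * Vᴴ ∧
      traceNorm M = ∑ j, d j := by
  have hH : (Mᴴ * M).PosSemidef := Matrix.posSemidef_conjTranspose_mul_self M
  have hHerm := hH.1
  set V : Matrix (Fin m) (Fin m) ℂ := (hHerm.eigenvectorUnitary : Matrix (Fin m) (Fin m) ℂ) with hV
  set lam : Fin m → ℝ := hHerm.eigenvalues with hlam
  have hlam0 : ∀ j, 0 ≤ lam j := fun j => hH.eigenvalues_nonneg j
  set v : Fin m → (Fin m → ℂ) := fun j => ⇑(hHerm.eigenvectorBasis j) with hv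
  have hVmem : V ∈ Matrix.unitaryGroup (Fin m) ℂ := hHerm.eigenvectorUnitary.2
  have hortho : ∀ i j : Fin m, dotProduct (star (v i)) (v j)
      = if i = j then 1 else 0 := by
    intro i j
    have := orthonormal_iff_ite.mp hHerm.eigenvectorBasis.orthonormal i j
    rw [EuclideanSpace.inner_eq_star_dotProduct, dotProduct_comm] at this
    exact this
  have hmv : ∀ i j : Fin m, dotProduct (star (M *ᵥ v i)) (M *ᵥ v j)
      = if i = j then (lam j : ℂ) else 0 := by
    intro i j
    rw [star_mulVec, dotProduct_mulVec, vecMul_vecMul, ← dotProduct_mulVec,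
      hHerm.mulVec_eigenvectorBasis]
    rw [dotProduct_smul]
    rw [hortho i j]
    simp [RCLike.real_smul_eq_coe_mul, hlam]
  -- M *ᵥ v j = 0 when lam j = 0
  have hzero : ∀ j : Fin m, lam j = 0 → M *ᵥ v j = 0 := by
    intro j hj
    have h0 : dotProduct (star (M *ᵥ v j)) (M *ᵥ v j) = 0 := by
      rw [hmv j j]; simp [hj]
    exact (dotProduct_star_self_eq_zero).mp h0
  -- the left singular vectors on the support
  classical
  set u : Fin m → EuclideanSpace ℂ (Fin m) :=
    fun j => if lam j = 0 then 0 else WithLp.toLp 2 (((Real.sqrt (lam j) : ℂ))⁻¹ • (M *ᵥ v j)) with hu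
  have huortho : Orthonormal ℂ (Set.restrict {j | lam j ≠ 0} u) := by
    rw [orthonormal_iff_ite]
    rintro ⟨i, hi⟩ ⟨j, hj⟩
    simp only [Set.mem_setOf_eq] at hi hj
    rw [EuclideanSpace.inner_eq_star_dotProduct, dotProduct_comm]
    have hri : (Set.restrict {j | lam j ≠ 0} u) ⟨i, hi⟩ = ((Real.sqrt (lam i) : ℂ))⁻¹ • (M *ᵥ v i) := by
      simp [Set.restrict, hu, hi]
    have hrj : (Set.restrict {j | lam j ≠ 0} u) ⟨j, hj⟩ = ((Real.sqrt (lam j) : ℂ))⁻¹ • (M *ᵥ v j) := by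
      simp [Set.restrict, hu, hj]
    rw [hri, hrj]
    show star (((Real.sqrt (lam i) : ℂ))⁻¹ • (M *ᵥ v i)) ⬝ᵥ
        (((Real.sqrt (lam j) : ℂ))⁻¹ • (M *ᵥ v j)) = _
    have heq : star (((Real.sqrt (lam i) : ℂ))⁻¹ • (M *ᵥ v i)) ⬝ᵥ (((Real.sqrt (lam j) : ℂ))⁻¹ • (M *ᵥ v j))
        = star ((Real.sqrt (lam i) : ℂ))⁻¹ * (((Real.sqrt (lam j) : ℂ))⁻¹ *
          (star (M *ᵥ v i) ⬝ᵥ (M *ᵥ v j))) := by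
      rw [star_smul, smul_dotProduct, dotProduct_smul, smul_eq_mul, smul_eq_mul, star_inv₀]
    rw [heq, hmv i j]
    by_cases hij : i = j
    · subst hij
      simp only [if_pos rfl, Subtype.mk.injEq, if_pos rfl]
      rw [star_inv₀]
      have hcr : star ((Real.sqrt (lam i) : ℂ)) = (Real.sqrt (lam i) : ℂ) := by
        rw [RCLike.star_def, Complex.conj_ofReal]
      rw [hcr]
      have h1 : ((Real.sqrt (lam i) : ℂ)) * (Real.sqrt (lam i) : ℂ) = (lam i : ℂ) := by
        rw [← Complex.ofReal_mul, Real.mul_self_sqrt (hlam0 i)]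
      have h2 : ((Real.sqrt (lam i) : ℂ)) ≠ 0 := by
        simp only [ne_eq, Complex.ofReal_eq_zero]
        exact Real.sqrt_ne_zero'.mpr (lt_of_le_of_ne (hlam0 i) (Ne.symm hi))
      field_simp
      simp only [if_true, mul_one]
      rw [← h1]
      ring
    · simp [hij, Subtype.mk.injEq]
  obtain ⟨b, hb⟩ := huortho.exists_orthonormalBasis_extension_of_card_eq
    (by simp : Module.finrank ℂ (EuclideanSpace ℂ (Fin m)) = Fintype.card (Fin m))
  set A : Matrix (Fin m) (Fin m) ℂ := Matrix.of (fun i j => b j i) with hA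
  have hAortho : ∀ i j : Fin m, dotProduct (star (fun k => A k i)) (fun k => A k j)
      = if i = j then 1 else 0 := by
    intro i j
    have := orthonormal_iff_ite.mp b.orthonormal i j
    rw [EuclideanSpace.inner_eq_star_dotProduct, dotProduct_comm] at this
    exact this
  have hAmem : A ∈ Matrix.unitaryGroup (Fin m) ℂ := by
    rw [Matrix.mem_unitaryGroup_iff']
    ext i j
    simp only [Matrix.mul_apply, Matrix.star_eq_conjTranspose, Matrix.conjTranspose_apply,
      Matrix.one_apply]
    have := hAortho i j
    simpa [dotProduct] using this
  -- M * V = A * D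
  have hMV : M * V = A * Matrix.diagonal (fun j => ((Real.sqrt (lam j) : ℂ))) := by
    ext i j
    rw [Matrix.mul_diagonal]
    have hMVe : (M * V) i j = (M *ᵥ v j) i := by
      simp only [Matrix.mul_apply, Matrix.mulVec, dotProduct, hv]
      refine Finset.sum_congr rfl fun k _ => ?_
      rw [hV]
      congr 1
    rw [hMVe]
    by_cases hj : lam j = 0
    · rw [hzero j hj, hj]
      simp
    · have hbj : b j = u j := hb j hj
      have : A i j = ((Real.sqrt (lam j) : ℂ))⁻¹ * (M *ᵥ v j) i := by
        rw [hA]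
        show b j i = _
        rw [hbj, hu]
        simp only [if_neg hj]
        rfl
      rw [this]
      have h2 : ((Real.sqrt (lam j) : ℂ)) ≠ 0 := by
        simp only [ne_eq, Complex.ofReal_eq_zero]
        exact Real.sqrt_ne_zero'.mpr (lt_of_le_of_ne (hlam0 j) (Ne.symm hj))
      field_simp
  have hVsV : Vᴴ * V = 1 := by
    have := Matrix.mem_unitaryGroup_iff'.mp hVmem
    rwa [Matrix.star_eq_conjTranspose] at this
  have hVVs : V * Vᴴ = 1 := by
    have := Matrix.mem_unitaryGroup_iff.mp hVmem
    rwa [Matrix.star_eq_conjTranspose] at this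
  refine ⟨A, V, fun j => Real.sqrt (lam j), hAmem, hVmem, fun j => Real.sqrt_nonneg _, ?_, ?_⟩
  · rw [← hMV, Matrix.mul_assoc, hVVs, Matrix.mul_one]
  · have hsq : sqrtM (Mᴴ * M) = (hH.1.eigenvectorUnitary : Matrix (Fin m) (Fin m) ℂ) *
        Matrix.diagonal ((↑) ∘ (√·) ∘ hH.1.eigenvalues) *
        (star hH.1.eigenvectorUnitary : Matrix (Fin m) (Fin m) ℂ) := by
      rw [sqrtM]
      exact dif_pos hH
    have hsqrt : (hH.1.eigenvectorUnitary : Matrix (Fin m) (Fin m) ℂ) *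
        Matrix.diagonal ((↑) ∘ (√·) ∘ hH.1.eigenvalues) *
        (star hH.1.eigenvectorUnitary : Matrix (Fin m) (Fin m) ℂ) = V * Matrix.diagonal (fun j => ((Real.sqrt (lam j) : ℂ))) * Vᴴ := rfl
    rw [traceNorm, hsq, hsqrt, Matrix.trace_mul_cycle, hVsV, Matrix.one_mul,
      Matrix.trace_diagonal]
    rw [Complex.re_sum]
    simp

open Matrix in
lemma unitary_entry_abs_le {m : ℕ} {W : Matrix (Fin m) (Fin m) ℂ}
    (hW : W ∈ Matrix.unitaryGroup (Fin m) ℂ) (i j : Fin m) : ‖W i j‖ ≤ 1 := by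
  have h := Matrix.mem_unitaryGroup_iff'.mp hW
  have hjj : (star W * W) j j = 1 := by rw [h]; simp
  rw [Matrix.mul_apply] at hjj
  have hsum : ∑ k, Complex.normSq (W k j) = 1 := by
    have : ∀ k, (star W) j k * W k j = (Complex.normSq (W k j) : ℂ) := by
      intro k
      show star (W k j) * W k j = _
      rw [Complex.normSq_eq_conj_mul_self]
      rfl
    rw [Finset.sum_congr rfl (fun k _ => this k)] at hjj
    have := congrArg Complex.re hjj
    rw [Complex.re_sum] at this
    simpa using this
  have h1 : Complex.normSq (W i j) ≤ 1 := by
    rw [← hsum]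
    exact Finset.single_le_sum (f := fun k => Complex.normSq (W k j))
      (fun k _ => Complex.normSq_nonneg _) (Finset.mem_univ i)
  rw [← Complex.sq_norm] at h1
  nlinarith [norm_nonneg (W i j)]

open Matrix in
/-- The trace norm is the maximum of `|tr (U * M)|` over unitaries `U`. -/
lemma isGreatest_abs_trace {m : ℕ} (M : Matrix (Fin m) (Fin m) ℂ) :
    IsGreatest {t : ℝ | ∃ U ∈ Matrix.unitaryGroup (Fin m) ℂ,
      t = ‖(U * M).trace‖} (traceNorm M) := by
  obtain ⟨A, V, d, hAmem, hVmem, hd0, hMeq, htn⟩ := exists_svd M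
  set D : Matrix (Fin m) (Fin m) ℂ := Matrix.diagonal (fun j => (d j : ℂ)) with hD
  have hAsA : Aᴴ * A = 1 := by
    have := Matrix.mem_unitaryGroup_iff'.mp hAmem
    rwa [Matrix.star_eq_conjTranspose] at this
  have hVsV : Vᴴ * V = 1 := by
    have := Matrix.mem_unitaryGroup_iff'.mp hVmem
    rwa [Matrix.star_eq_conjTranspose] at this
  have hAHmem : Aᴴ ∈ Matrix.unitaryGroup (Fin m) ℂ := by
    rw [Matrix.mem_unitaryGroup_iff, Matrix.star_eq_conjTranspose,
      Matrix.conjTranspose_conjTranspose]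
    exact hAsA
  have hVHmem : Vᴴ ∈ Matrix.unitaryGroup (Fin m) ℂ := by
    rw [Matrix.mem_unitaryGroup_iff, Matrix.star_eq_conjTranspose,
      Matrix.conjTranspose_conjTranspose]
    exact hVsV
  constructor
  · refine ⟨V * Aᴴ, ?_, ?_⟩
    · exact mul_mem hVmem hAHmem
    · have : V * Aᴴ * M = V * D * Vᴴ := by
        rw [hMeq]
        calc V * Aᴴ * (A * D * Vᴴ) = V * (Aᴴ * A) * (D * Vᴴ) := by noncomm_ring
          _ = V * D * Vᴴ := by rw [hAsA, Matrix.mul_one]; noncomm_ring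
      rw [this, Matrix.trace_mul_cycle, hVsV, Matrix.one_mul, Matrix.trace_diagonal]
      rw [htn]
      rw [show ∑ i, ((d i : ℂ)) = ((∑ i, d i : ℝ) : ℂ) by push_cast; ring]
      rw [Complex.norm_real, Real.norm_eq_abs, abs_of_nonneg (Finset.sum_nonneg fun j _ => hd0 j)]
  · rintro t ⟨U, hU, rfl⟩
    set W : Matrix (Fin m) (Fin m) ℂ := Vᴴ * U * A with hW
    have hWmem : W ∈ Matrix.unitaryGroup (Fin m) ℂ :=
      mul_mem (mul_mem hVHmem hU) hAmem
    have htr : (U * M).trace = ∑ j, (d j : ℂ) * W j j := by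
      rw [hMeq, show U * (A * D * Vᴴ) = (U * A * D) * Vᴴ by noncomm_ring,
        Matrix.trace_mul_cycle]
      rw [show Vᴴ * (U * A) * D = (Vᴴ * U * A) * D by noncomm_ring, ← hW,
        Matrix.trace_mul_comm]
      rw [Matrix.trace]
      refine Finset.sum_congr rfl fun j _ => ?_
      rw [Matrix.diag_apply, Matrix.mul_apply]
      simp [hD, Matrix.diagonal_apply, ite_mul, zero_mul]
    rw [htr, htn]
    calc ‖∑ j, (d j : ℂ) * W j j‖
        ≤ ∑ j, ‖(d j : ℂ) * W j j‖ := norm_sum_le _ _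
      _ ≤ ∑ j, d j := by
          refine Finset.sum_le_sum fun j _ => ?_
          rw [norm_mul, Complex.norm_real, Real.norm_eq_abs, abs_of_nonneg (hd0 j)]
          calc d j * ‖W j j‖ ≤ d j * 1 :=
                mul_le_mul_of_nonneg_left (unitary_entry_abs_le hWmem j j) (hd0 j)
            _ = d j := mul_one _


/-- The trace norm of the partial trace over H of |ψ⟩⟨φ| equals the maximum over
unitaries U on K of |⟨φ|(I ⊗ U)|ψ⟩|. -/
theorem traceNorm_ptrace_outer_eq_max_overlap {n m : ℕ} (ρ ξ : Matrix (Fin n) (Fin n) Complex)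
    (hρ : ρ.PosSemidef) (hρtr : ρ.trace = 1) (hξ : ξ.PosSemidef) (hξtr : ξ.trace = 1)
    (ψ φ : Fin n × Fin m → Complex)
    (hψ : ptraceSnd (outer ψ ψ) = ρ) (hφ : ptraceSnd (outer φ φ) = ξ) :
    IsGreatest {t : Real | ∃ U ∈ Matrix.unitaryGroup (Fin m) Complex,
        t = ‖∑ s : Fin n × Fin m, star (φ s) * ∑ j : Fin m, U s.2 j * ψ (s.1, j)‖}
      (traceNorm (ptraceFst (outer ψ φ))) := by
  have key : ∀ U : Matrix (Fin m) (Fin m) ℂ,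
      (∑ s : Fin n × Fin m, star (φ s) * ∑ j : Fin m, U s.2 j * ψ (s.1, j))
        = (U * ptraceFst (outer ψ φ)).trace := by
    intro U
    rw [Matrix.trace]
    simp only [Matrix.diag_apply, Matrix.mul_apply, ptraceFst, outer, Matrix.of_apply,
      Fintype.sum_prod_type, Finset.mul_sum, Finset.sum_mul]
    rw [Finset.sum_comm]
    refine Finset.sum_congr rfl fun i _ => ?_
    rw [Finset.sum_comm]
    refine Finset.sum_congr rfl fun j _ => ?_
    refine Finset.sum_congr rfl fun a _ => ?_
    ring
  have hset : {t : Real | ∃ U ∈ Matrix.unitaryGroup (Fin m) Complex,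
      t = ‖∑ s : Fin n × Fin m, star (φ s) * ∑ j : Fin m, U s.2 j * ψ (s.1, j)‖}
      = {t : Real | ∃ U ∈ Matrix.unitaryGroup (Fin m) ℂ,
      t = ‖(U * ptraceFst (outer ψ φ)).trace‖} := by
    ext t
    constructor <;> rintro ⟨U, hU, rfl⟩ <;> exact ⟨U, hU, by rw [key U]⟩
  rw [hset]
  exact isGreatest_abs_trace _
end

section
/- Let D be the single-qubit decoherence channel D(σ) = |0⟩⟨0|σ|0⟩⟨0| + |1⟩⟨1|σ|1⟩⟨1|. For any unit vectors |φ₀⟩, |φ₁⟩ ∈ K ⊗ F and |φ⟩ = √p|0⟩|φ₀⟩ + √(1−p)|1⟩|φ₁⟩ with p ∈ [0,1], define R₀(ρ) = tr_K(ρ) and R₁(ρ) = (D ⊗ I)(tr_K(ρ)) acting on states of the qubit together with K ⊗ F, where the qubit is not traced out. Then ‖R₀(|φ⟩⟨φ|) − R₁(|φ⟩⟨φ|)‖_tr = 2√(p(1−p)) · ‖tr_K(|φ₀⟩⟨φ₁|)‖_tr. -/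
open scoped ComplexOrder Matrix

/-- Partial trace over the middle tensor factor. -/
noncomputable def ptraceMid {α β γ : Type} [Fintype β]
    (X : Matrix (α × β × γ) (α × β × γ) Complex) : Matrix (α × γ) (α × γ) Complex :=
  Matrix.of fun s t => ∑ b : β, X (s.1, b, s.2) (t.1, b, t.2)

/-- The decoherence channel D on the first (qubit) factor, tensored with the identity:
off-diagonal blocks in the qubit index are set to zero. -/
noncomputable def decohereFst {γ : Type}
    (Y : Matrix (Fin 2 × γ) (Fin 2 × γ) Complex) : Matrix (Fin 2 × γ) (Fin 2 × γ) Complex :=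
  Matrix.of fun s t => if s.1 = t.1 then Y s t else 0

set_option linter.unusedSectionVars false

section helpers
open Matrix Polynomial
open scoped MatrixOrder

variable {i : Type} [Fintype i] [DecidableEq i]

lemma sqrtM_eq_CFCsqrt {N : Matrix i i Complex} (hN : N.PosSemidef) : sqrtM N = CFC.sqrt N := by
  simp only [sqrtM, dif_pos hN]
  rw [CFC.sqrt_eq_real_sqrt N hN.nonneg, cfcₙ_eq_cfc, hN.1.cfc_eq, IsHermitian.cfc,
    Unitary.conjStarAlgAut_apply]
  rfl

lemma sqrtM_eq_s15 {N B : Matrix i i Complex} (hB : B.PosSemidef) (h : B * B = N) :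
    sqrtM N = B := by
  have hN : N.PosSemidef := by
    rw [← h]
    nth_rewrite 1 [← hB.1]
    exact Matrix.posSemidef_conjTranspose_mul_self B
  rw [sqrtM_eq_CFCsqrt hN]
  exact (CFC.sqrt_eq_iff N B hN.nonneg hB.nonneg).2 h

lemma sqrtM_psd {N : Matrix i i Complex} (hN : N.PosSemidef) : (sqrtM N).PosSemidef := by
  rw [sqrtM_eq_CFCsqrt hN]; exact (CFC.sqrt_nonneg N).posSemidef

lemma sqrtM_mul_self_s15 {N : Matrix i i Complex} (hN : N.PosSemidef) : sqrtM N * sqrtM N = N := by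
  rw [sqrtM_eq_CFCsqrt hN]; exact CFC.sqrt_mul_sqrt_self N hN.nonneg

lemma psd_smul {X : Matrix i i Complex} (hX : X.PosSemidef) {c : ℝ} (hc : 0 ≤ c) :
    ((c : ℂ) • X).PosSemidef := by
  refine Matrix.PosSemidef.of_dotProduct_mulVec_nonneg ?_ ?_
  · have : (starRingEnd ℂ) (c : ℂ) = (c : ℂ) := Complex.conj_ofReal c
    rw [Matrix.IsHermitian, Matrix.conjTranspose_smul, hX.1]
    simp [Complex.conj_ofReal]
  · intro x
    rw [Matrix.smul_mulVec, dotProduct_smul, smul_eq_mul]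
    exact mul_nonneg (by exact_mod_cast hc) (hX.dotProduct_mulVec_nonneg x)

/-- Conjugation by a unitary as an algebra homomorphism. -/
noncomputable def conjAH (U : Matrix i i Complex) (h : U * star U = 1) (h' : star U * U = 1) :
    Matrix i i Complex →ₐ[Complex] Matrix i i Complex where
  toFun X := U * X * star U
  map_one' := by show U * 1 * star U = 1; rw [mul_one, h]
  map_mul' X Y := by
    show U * (X * Y) * star U = U * X * star U * (U * Y * star U)
    rw [show U * X * star U * (U * Y * star U) = U * X * (star U * U * (Y * star U)) by
      simp only [Matrix.mul_assoc], h', one_mul]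
    simp only [Matrix.mul_assoc]
  map_zero' := by simp
  map_add' X Y := by
    show U * (X + Y) * star U = U * X * star U + U * Y * star U
    rw [Matrix.mul_add, Matrix.add_mul]
  commutes' r := by
    show U * algebraMap ℂ (Matrix i i ℂ) r * star U = algebraMap ℂ (Matrix i i ℂ) r
    rw [Algebra.algebraMap_eq_smul_one, Matrix.mul_smul, mul_one, Matrix.smul_mul, h]

lemma aeval_hermitian {N : Matrix i i Complex} (hN : N.IsHermitian) (g : Polynomial ℝ) :
    (Polynomial.aeval N) (g.map (algebraMap ℝ ℂ)) = hN.cfc (fun x => g.eval x) := by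
  have h : (hN.eigenvectorUnitary : Matrix i i ℂ) * star (hN.eigenvectorUnitary : Matrix i i ℂ) = 1 :=
    Unitary.mul_star_self_of_mem (hN.eigenvectorUnitary).2
  have h' : star (hN.eigenvectorUnitary : Matrix i i ℂ) * (hN.eigenvectorUnitary : Matrix i i ℂ) = 1 :=
    Unitary.star_mul_self_of_mem (hN.eigenvectorUnitary).2
  have hs : N = conjAH (hN.eigenvectorUnitary : Matrix i i ℂ) h h'
      (Matrix.diagonal (RCLike.ofReal ∘ hN.eigenvalues)) := hN.spectral_theorem
  conv_lhs => rw [hs]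
  rw [aeval_algHom_apply]
  have hd : (aeval (Matrix.diagonal (RCLike.ofReal ∘ hN.eigenvalues) : Matrix i i ℂ))
      (g.map (algebraMap ℝ ℂ)) =
      Matrix.diagonal (fun j => ((g.eval (hN.eigenvalues j) : ℝ) : ℂ)) := by
    rw [show (Matrix.diagonal (RCLike.ofReal ∘ hN.eigenvalues) : Matrix i i ℂ)
        = Matrix.diagonalAlgHom ℂ (RCLike.ofReal ∘ hN.eigenvalues : i → ℂ) from rfl,
      aeval_algHom_apply]
    have hv : (aeval (RCLike.ofReal ∘ hN.eigenvalues : i → ℂ)) (g.map (algebraMap ℝ ℂ))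
        = fun j => ((g.eval (hN.eigenvalues j) : ℝ) : ℂ) := by
      funext j
      rw [aeval_fn_apply]
      simp only [Function.comp_apply]
      rw [aeval_map_algebraMap]
      rw [show (RCLike.ofReal (hN.eigenvalues j) : ℂ) = algebraMap ℝ ℂ (hN.eigenvalues j) from rfl,
        aeval_algebraMap_apply]
      simp [Polynomial.aeval_def, Polynomial.eval₂_eq_eval_map, Algebra.algebraMap_self]
    rw [hv]
    rfl
  rw [hd]
  rfl

lemma trace_cfc {N : Matrix i i Complex} (hN : N.IsHermitian) (f : ℝ → ℝ) :
    (hN.cfc f).trace = ∑ j, ((f (hN.eigenvalues j) : ℝ) : ℂ) := by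
  have h' : star (hN.eigenvectorUnitary : Matrix i i ℂ) * (hN.eigenvectorUnitary : Matrix i i ℂ) = 1 :=
    Unitary.star_mul_self_of_mem (hN.eigenvectorUnitary).2
  rw [Matrix.IsHermitian.cfc, Unitary.conjStarAlgAut_apply, Matrix.trace_mul_cycle, h', one_mul,
    Matrix.trace_diagonal]
  rfl

lemma sqrt_eq_cfc {N : Matrix i i Complex} (hN : N.PosSemidef) :
    sqrtM N = hN.1.cfc Real.sqrt := by
  simp only [sqrtM, dif_pos hN]
  rfl

lemma trace_sqrtM_comm (A : Matrix i i Complex) :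
    (sqrtM (A * Aᴴ)).trace = (sqrtM (Aᴴ * A)).trace := by
  classical
  have h1 := Matrix.posSemidef_conjTranspose_mul_self A
  have h2 := Matrix.posSemidef_self_mul_conjTranspose A
  set s : Finset ℝ := Finset.image h2.1.eigenvalues Finset.univ ∪
    Finset.image h1.1.eigenvalues Finset.univ with hs
  set g : Polynomial ℝ := Lagrange.interpolate s id Real.sqrt with hg
  have hgs : ∀ x ∈ s, g.eval x = Real.sqrt x := by
    intro x hx
    have := Lagrange.eval_interpolate_at_node Real.sqrt (Set.injOn_id _) hx
    simpa [hg] using this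
  have key : ∀ (N : Matrix i i Complex) (hN : N.PosSemidef), (∀ j, hN.1.eigenvalues j ∈ s) →
      sqrtM N = (Polynomial.aeval N) (g.map (algebraMap ℝ ℂ)) := by
    intro N hN hmem
    rw [aeval_hermitian hN.1 g, sqrt_eq_cfc hN]
    show (hN.1.eigenvectorUnitary : Matrix i i ℂ) *
        Matrix.diagonal (RCLike.ofReal ∘ Real.sqrt ∘ hN.1.eigenvalues) *
        star (hN.1.eigenvectorUnitary : Matrix i i ℂ) =
      (hN.1.eigenvectorUnitary : Matrix i i ℂ) *
        Matrix.diagonal (RCLike.ofReal ∘ (fun x : ℝ => g.eval x) ∘ hN.1.eigenvalues) *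
        star (hN.1.eigenvectorUnitary : Matrix i i ℂ)
    rw [show (RCLike.ofReal ∘ Real.sqrt ∘ hN.1.eigenvalues : i → ℂ)
        = RCLike.ofReal ∘ (fun x : ℝ => g.eval x) ∘ hN.1.eigenvalues from
      funext fun j => by simp [hgs _ (hmem j)]]
  rw [key _ h2 (fun j => Finset.mem_union_left _ (Finset.mem_image_of_mem _ (Finset.mem_univ j))),
    key _ h1 (fun j => Finset.mem_union_right _ (Finset.mem_image_of_mem _ (Finset.mem_univ j)))]
  have pow_eq : ∀ n : ℕ, (Aᴴ * A) ^ (n + 1) = Aᴴ * ((A * Aᴴ) ^ n * A) := by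
    intro n
    induction n with
    | zero => simp [Matrix.mul_assoc]
    | succ m ih =>
        rw [pow_succ, ih, pow_succ]
        simp only [Matrix.mul_assoc]
  have pow_tr : ∀ k : ℕ, ((A * Aᴴ) ^ k).trace = ((Aᴴ * A) ^ k).trace := by
    intro k
    cases k with
    | zero => simp
    | succ n =>
        rw [pow_eq n, Matrix.trace_mul_comm, pow_succ]
        simp only [Matrix.mul_assoc]
  rw [Polynomial.aeval_eq_sum_range, Polynomial.aeval_eq_sum_range, Matrix.trace_sum,
    Matrix.trace_sum]
  exact Finset.sum_congr rfl fun k _ => by rw [Matrix.trace_smul, Matrix.trace_smul, pow_tr k]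

lemma traceNorm_conjTranspose (A : Matrix i i Complex) : traceNorm Aᴴ = traceNorm A := by
  rw [traceNorm, traceNorm, Matrix.conjTranspose_conjTranspose, trace_sqrtM_comm]

end helpers

section blocks
open Matrix

variable {γ : Type} [Fintype γ] [DecidableEq γ]

/-- Block diagonal 2x2. -/
noncomputable def bd (P Q : Matrix γ γ Complex) : Matrix (Fin 2 × γ) (Fin 2 × γ) Complex :=
  Matrix.of fun s t =>
    if s.1 = 0 then (if t.1 = 0 then P s.2 t.2 else 0)
    else (if t.1 = 0 then 0 else Q s.2 t.2)

/-- Block antidiagonal 2x2. -/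
noncomputable def ad (P Q : Matrix γ γ Complex) : Matrix (Fin 2 × γ) (Fin 2 × γ) Complex :=
  Matrix.of fun s t =>
    if s.1 = 0 then (if t.1 = 0 then 0 else P s.2 t.2)
    else (if t.1 = 0 then Q s.2 t.2 else 0)

lemma ad_conjTranspose (P Q : Matrix γ γ Complex) : (ad P Q)ᴴ = ad Qᴴ Pᴴ := by
  ext ⟨i, x⟩ ⟨j, y⟩
  fin_cases i <;> fin_cases j <;>
    simp [ad, Matrix.conjTranspose_apply]

lemma ad_mul_ad (P Q P' Q' : Matrix γ γ Complex) :
    ad P Q * ad P' Q' = bd (P * Q') (Q * P') := by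
  ext ⟨i, x⟩ ⟨j, y⟩
  fin_cases i <;> fin_cases j <;>
    simp [ad, bd, Matrix.mul_apply, Fintype.sum_prod_type, Fin.sum_univ_two]

lemma bd_mul_bd (P Q P' Q' : Matrix γ γ Complex) :
    bd P Q * bd P' Q' = bd (P * P') (Q * Q') := by
  ext ⟨i, x⟩ ⟨j, y⟩
  fin_cases i <;> fin_cases j <;>
    simp [bd, Matrix.mul_apply, Fintype.sum_prod_type, Fin.sum_univ_two]

lemma bd_trace (P Q : Matrix γ γ Complex) : (bd P Q).trace = P.trace + Q.trace := by
  simp [Matrix.trace, bd, Fintype.sum_prod_type, Fin.sum_univ_two, Matrix.diag]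

lemma bd_posSemidef {P Q : Matrix γ γ Complex} (hP : P.PosSemidef) (hQ : Q.PosSemidef) :
    (bd P Q).PosSemidef := by
  refine Matrix.PosSemidef.of_dotProduct_mulVec_nonneg ?_ ?_
  · ext ⟨i, x⟩ ⟨j, y⟩
    fin_cases i <;> fin_cases j <;>
      simp [bd, Matrix.conjTranspose_apply, hP.1.apply, hQ.1.apply]
  · intro x
    have key : star x ⬝ᵥ (bd P Q) *ᵥ x =
        star (fun z => x (0, z)) ⬝ᵥ P *ᵥ (fun z => x (0, z)) +
        star (fun z => x (1, z)) ⬝ᵥ Q *ᵥ (fun z => x (1, z)) := by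
      simp [dotProduct, Matrix.mulVec, bd, Fintype.sum_prod_type, Fin.sum_univ_two]
    rw [key]
    exact add_nonneg (hP.dotProduct_mulVec_nonneg _) (hQ.dotProduct_mulVec_nonneg _)

end blocks

/-- The difference between tracing out K and additionally decohering the control qubit,
applied to |φ⟩⟨φ| for φ = √p|0⟩|φ₀⟩ + √(1-p)|1⟩|φ₁⟩, has trace norm
2√(p(1-p))·‖tr_K|φ₀⟩⟨φ₁|‖_tr. -/
theorem decoherence_difference_traceNorm {a b : ℕ}
    (φ₀ φ₁ : Fin a × Fin b → Complex)
    (h₀ : ∑ x, Complex.normSq (φ₀ x) = 1) (h₁ : ∑ x, Complex.normSq (φ₁ x) = 1)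
    (p : Real) (hp : p ∈ Set.Icc (0 : Real) 1)
    (φ : Fin 2 × (Fin a × Fin b) → Complex)
    (hφ : φ = fun s => if s.1 = 0 then (Real.sqrt p : Complex) * φ₀ s.2
      else (Real.sqrt (1 - p) : Complex) * φ₁ s.2) :
    traceNorm (ptraceMid (outer φ φ) - decohereFst (ptraceMid (outer φ φ))) =
      2 * Real.sqrt (p * (1 - p)) * traceNorm (ptraceFst (outer φ₀ φ₁)) := by
  classical
  subst hφ
  set A : Matrix (Fin b) (Fin b) ℂ := ptraceFst (outer φ₀ φ₁) with hA
  set c : ℝ := Real.sqrt p * Real.sqrt (1 - p) with hc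
  have hc0 : 0 ≤ c := mul_nonneg (Real.sqrt_nonneg _) (Real.sqrt_nonneg _)
  set φ : Fin 2 × (Fin a × Fin b) → Complex := fun s => if s.1 = 0
      then (Real.sqrt p : Complex) * φ₀ s.2 else (Real.sqrt (1 - p) : Complex) * φ₁ s.2 with hφ
  have hM : ptraceMid (outer φ φ) - decohereFst (ptraceMid (outer φ φ)) = (c : ℂ) • ad A Aᴴ := by
    ext ⟨i, x⟩ ⟨j, y⟩
    fin_cases i <;> fin_cases j
    · simp [ptraceMid, decohereFst, ad]
    · simp only [Matrix.sub_apply, Matrix.smul_apply, ptraceMid, decohereFst, outer, ad, hφ, hA,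
        ptraceFst, Matrix.of_apply, smul_eq_mul]
      simp only [Fin.mk_zero, Fin.mk_one, eq_false (by decide : ¬((1 : Fin 2) = 0)),
        eq_false (by decide : ¬((0 : Fin 2) = 1)), if_false, if_true, sub_zero]
      rw [Finset.mul_sum]
      refine Finset.sum_congr rfl fun k _ => ?_
      simp only [star_mul', Complex.star_def, Complex.conj_ofReal, hc, Complex.ofReal_mul]
      ring
    · simp only [Matrix.sub_apply, Matrix.smul_apply, ptraceMid, decohereFst, outer, ad, hφ, hA,
        ptraceFst, Matrix.of_apply, smul_eq_mul, Matrix.conjTranspose_apply]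
      simp only [Fin.mk_zero, Fin.mk_one, eq_false (by decide : ¬((1 : Fin 2) = 0)),
        eq_false (by decide : ¬((0 : Fin 2) = 1)), if_false, if_true, sub_zero,
        Matrix.conjTranspose_apply, Matrix.of_apply]
      rw [star_sum, Finset.mul_sum]
      refine Finset.sum_congr rfl fun k _ => ?_
      simp only [star_mul', star_star, Complex.star_def, Complex.conj_conj, Complex.conj_ofReal, hc, Complex.ofReal_mul]
      ring
    · simp [ptraceMid, decohereFst, ad]
  rw [hM]
  have hhermad : (ad A Aᴴ)ᴴ = ad A Aᴴ := by
    rw [ad_conjTranspose, Matrix.conjTranspose_conjTranspose]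
  have hAAH := Matrix.posSemidef_self_mul_conjTranspose A
  have hAHA := Matrix.posSemidef_conjTranspose_mul_self A
  simp only [traceNorm]
  have hsq : ((c : ℂ) • ad A Aᴴ)ᴴ * ((c : ℂ) • ad A Aᴴ)
      = ((c * c : ℝ) : ℂ) • bd (A * Aᴴ) (Aᴴ * A) := by
    rw [Matrix.conjTranspose_smul, hhermad, Matrix.smul_mul, Matrix.mul_smul, smul_smul,
      ad_mul_ad]
    congr 1
    simp [Complex.conj_ofReal]
  rw [hsq]
  have hsqrt : sqrtM (((c * c : ℝ) : ℂ) • bd (A * Aᴴ) (Aᴴ * A))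
      = (c : ℂ) • bd (sqrtM (A * Aᴴ)) (sqrtM (Aᴴ * A)) := by
    apply sqrtM_eq_s15 (psd_smul (bd_posSemidef (sqrtM_psd hAAH) (sqrtM_psd hAHA)) hc0)
    rw [Matrix.smul_mul, Matrix.mul_smul, smul_smul, bd_mul_bd, sqrtM_mul_self_s15 hAAH,
      sqrtM_mul_self_s15 hAHA]
    norm_cast
  rw [hsqrt, Matrix.trace_smul, bd_trace, smul_eq_mul]
  have e2 : ((sqrtM (A * Aᴴ)).trace).re = traceNorm A := by
    rw [← traceNorm_conjTranspose A]
    simp only [traceNorm, Matrix.conjTranspose_conjTranspose]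
  have e1 : ((sqrtM (Aᴴ * A)).trace).re = traceNorm A := rfl
  have hre : ((c : ℂ) * ((sqrtM (A * Aᴴ)).trace + (sqrtM (Aᴴ * A)).trace)).re
      = c * (((sqrtM (A * Aᴴ)).trace).re + ((sqrtM (Aᴴ * A)).trace).re) := by
    simp [Complex.mul_re]
  rw [hre, e1, e2, hc, Real.sqrt_mul hp.1]
  ring
end
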